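/- Let M ∈ ℝ, c ∈ ℝ with c < 0, and assume 3(c − 1)² < 4M < (1 − 3c)(3 − c). Let H be the map H(x,y) = (x̄, ȳ) with x̄ = M + c·x − y², ȳ = (y + x̄² − M)/c. Then H has exactly two fixed points off the diagonal, namely the symmetric couple (u,v) and (v,u) with u + v = 1 − c, u·v = (1 − c)² − M, u ≠ v, and at each of them the Jacobian matrix of H has two non-real complex eigenvalues of modulus 1 (i.e. between the pitchfork curve PF and the curve PD(asym), the symmetric couple of fixed points of H is elliptic). -/

import Mathlib

/-- The map `H(x,y) = (x̄, ȳ)` with `x̄ = M + c·x − y²` and `ȳ = (y + x̄² − M)/c`,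
the explicit form of the implicit system `x̄ = M + c·x − y²`, `c·ȳ = −M + y + x̄²`. -/
noncomputable def Hmap (M c : ℝ) (p : ℝ × ℝ) : ℝ × ℝ :=
  (M + c * p.1 - p.2 ^ 2,
    (p.2 + (M + c * p.1 - p.2 ^ 2) ^ 2 - M) / c)

/-- The Jacobian matrix (2×2 real derivative matrix) of `Hmap M c` at the point
`(x,y)`, where `x̄ = M + c·x − y²`:
`[[c, −2y], [2x̄, (1 − 4x̄y)/c]]`. -/
noncomputable def HJac (M c : ℝ) (p : ℝ × ℝ) : Matrix (Fin 2) (Fin 2) ℝ :=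
  !![c, -2 * p.2;
     2 * (M + c * p.1 - p.2 ^ 2), (1 - 4 * (M + c * p.1 - p.2 ^ 2) * p.2) / c]

/-- `μ ∈ ℂ` is an eigenvalue of the real 2×2 matrix `A`
(eigenvalues of real matrices are taken over `ℂ`). -/
def hasEigenvalue (A : Matrix (Fin 2) (Fin 2) ℝ) (μ : ℂ) : Prop :=
  (A.map (fun t : ℝ => (t : ℂ)) - μ • 1).det = 0

lemma eig_aux (T : ℝ) (hT : T ^ 2 < 4) (μ : ℂ)
    (h : μ ^ 2 - (T : ℂ) * μ + 1 = 0) : μ.im ≠ 0 ∧ ‖μ‖ = 1 := by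
  set a := μ.re with ha
  set b := μ.im with hb
  have h2 : μ * μ - (T : ℂ) * μ + 1 = 0 := by rw [← sq]; exact h
  have hreal : a * a - b * b - T * a + 1 = 0 := by
    have := congrArg Complex.re h2
    simpa [Complex.mul_re, Complex.add_re, Complex.sub_re] using this
  have himag : (a * b + b * a) - T * b = 0 := by
    have := congrArg Complex.im h2
    simpa [Complex.mul_im, Complex.add_im, Complex.sub_im] using this
  have hbne : b ≠ 0 := by
    intro hb0
    rw [hb0] at hreal
    nlinarith [sq_nonneg (2 * a - T)]
  refine ⟨hbne, ?_⟩
  have hT2 : T = 2 * a := by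
    have : b * (a + a - T) = 0 := by linarith [himag]; 
    rcases mul_eq_zero.mp this with h' | h'
    · exact absurd h' hbne
    · linarith
  have habs : a ^ 2 + b ^ 2 = 1 := by rw [hT2] at hreal; nlinarith
  have hsq : ‖μ‖ ^ 2 = 1 := by
    rw [Complex.sq_norm, Complex.normSq_apply, ← ha, ← hb]; nlinarith
  nlinarith [norm_nonneg μ, hsq]

lemma jac_aux (M c : ℝ) (hc : c ≠ 0) (x y : ℝ)
    (hfix : M + c * x - y ^ 2 = x)
    (hT : (c + (1 - 4 * x * y) / c) ^ 2 < 4) (μ : ℂ)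
    (h : hasEigenvalue (HJac M c (x, y)) μ) : μ.im ≠ 0 ∧ ‖μ‖ = 1 := by
  apply eig_aux (c + (1 - 4 * x * y) / c) hT
  simp only [hasEigenvalue, HJac, Matrix.det_fin_two, Matrix.sub_apply, Matrix.map_apply,
    Matrix.smul_apply, Matrix.one_apply, Matrix.cons_val', Matrix.cons_val_zero,
    Matrix.cons_val_one, Matrix.head_cons, Matrix.head_fin_const, Matrix.empty_val',
    Matrix.cons_val_fin_one] at h
  simp only [hfix] at h
  simp at h
  have hcC : (c : ℂ) ≠ 0 := by exact_mod_cast hc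
  push_cast at h ⊢
  field_simp at h ⊢
  linear_combination h

/-- for `c < 0` and `3(c−1)² < 4M < (1−3c)(3−c)` (between the pitchfork
curve `PF` and the curve `PD(asym)`), `H` has exactly two fixed points off the diagonal,
the symmetric couple `(u,v)` and `(v,u)` with `u + v = 1 − c`, `u·v = (1−c)² − M`, `u ≠ v`,
and at each of them the Jacobian matrix has two non-real complex eigenvalues of
modulus `1` (the symmetric couple of fixed points is elliptic). -/
theorem stmt_18 (M c : ℝ) (hc : c < 0)
    (h1 : 3 * (c - 1) ^ 2 < 4 * M) (h2 : 4 * M < (1 - 3 * c) * (3 - c)) :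
    ∃ u v : ℝ, u ≠ v ∧ u + v = 1 - c ∧ u * v = (1 - c) ^ 2 - M ∧
      Hmap M c (u, v) = (u, v) ∧ Hmap M c (v, u) = (v, u) ∧
      {p : ℝ × ℝ | Hmap M c p = p ∧ p.1 ≠ p.2} = {(u, v), (v, u)} ∧
      (∀ μ : ℂ, hasEigenvalue (HJac M c (u, v)) μ →
        μ.im ≠ 0 ∧ ‖μ‖ = 1) ∧
      (∀ μ : ℂ, hasEigenvalue (HJac M c (v, u)) μ →
        μ.im ≠ 0 ∧ ‖μ‖ = 1) := by
  have hc0 : c ≠ 0 := ne_of_lt hc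
  set D : ℝ := 4 * M - 3 * (1 - c) ^ 2 with hD
  have hDpos : 0 < D := by nlinarith
  set d : ℝ := Real.sqrt D with hd
  have hdpos : 0 < d := Real.sqrt_pos.mpr hDpos
  have hdsq : d ^ 2 = D := Real.sq_sqrt hDpos.le
  set u : ℝ := ((1 - c) + d) / 2 with hu
  set v : ℝ := ((1 - c) - d) / 2 with hv
  have hne : u ≠ v := by intro h; rw [hu, hv] at h; nlinarith [h]
  have huv : u + v = 1 - c := by rw [hu, hv]; ring
  have hmul : u * v = (1 - c) ^ 2 - M := by
    rw [hu, hv]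
    have : ((1 - c) + d) / 2 * (((1 - c) - d) / 2) = ((1 - c) ^ 2 - d ^ 2) / 4 := by ring
    rw [this, hdsq, hD]; ring
  -- fixed point equations
  have hA1 : M + c * u - v ^ 2 = u := by linear_combination (c - 1 - v) * huv + hmul
  have hA2 : (v + u ^ 2 - M) / c = v := by
    rw [div_eq_iff hc0]
    linear_combination (u + 1 - c) * huv - hmul
  have hB1 : M + c * v - u ^ 2 = v := by linear_combination (c - 1 - u) * huv + hmul
  have hB2 : (u + v ^ 2 - M) / c = u := by
    rw [div_eq_iff hc0]
    linear_combination (v + 1 - c) * huv - hmul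
  have hfixA : Hmap M c (u, v) = (u, v) := by
    rw [Hmap]; simp only [hA1]; rw [Prod.mk.injEq]; exact ⟨rfl, hA2⟩
  have hfixB : Hmap M c (v, u) = (v, u) := by
    rw [Hmap]; simp only [hB1]; rw [Prod.mk.injEq]; exact ⟨rfl, hB2⟩
  -- trace condition
  have hT : (c + (1 - 4 * u * v) / c) ^ 2 < 4 := by
    set T : ℝ := c + (1 - 4 * u * v) / c with hTdef
    have hcT : c * T = c ^ 2 + 1 - 4 * ((1 - c) ^ 2 - M) := by
      rw [hTdef, ← hmul]; field_simp; ring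
    have hA : 0 < c * T - 2 * c := by nlinarith [hcT]
    have hB : c * T + 2 * c < 0 := by nlinarith [hcT]
    have key : 0 < (c * T - 2 * c) * (-(c * T + 2 * c)) := mul_pos hA (by linarith)
    have hc2 : 0 < c ^ 2 := by positivity
    nlinarith [key, hc2]
  refine ⟨u, v, hne, huv, hmul, hfixA, hfixB, ?_, ?_, ?_⟩
  · ext p
    obtain ⟨x, y⟩ := p
    simp only [Set.mem_setOf_eq, Set.mem_insert_iff, Set.mem_singleton_iff, Prod.mk.injEq, Hmap]
    constructor
    · rintro ⟨⟨e1, e2⟩, hxy⟩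
      rw [e1, div_eq_iff hc0] at e2
      have hyx : y - x ≠ 0 := sub_ne_zero.mpr (Ne.symm hxy)
      have hsum : x + y = 1 - c := by
        have key : (y - x) * (x + y - (1 - c)) = 0 := by linear_combination -e1 - e2
        rcases mul_eq_zero.mp key with h' | h'
        · exact absurd h' hyx
        · linarith
      have hquad : (x - u) * (x - v) = 0 := by
        linear_combination (-x) * huv + hmul - e1 + (x - y - (1 - c)) * hsum
      rcases mul_eq_zero.mp hquad with h' | h'
      · have hx : x = u := by linarith [sub_eq_zero.mp h']
        left; exact ⟨hx, by linarith⟩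
      · have hx : x = v := by linarith [sub_eq_zero.mp h']
        right; exact ⟨hx, by linarith⟩
    · rintro (⟨hx, hy⟩ | ⟨hx, hy⟩) <;> subst hx <;> subst hy
      · exact ⟨⟨hA1, by rw [hA1]; exact hA2⟩, hne⟩
      · exact ⟨⟨hB1, by rw [hB1]; exact hB2⟩, Ne.symm hne⟩
  · exact fun μ h => jac_aux M c hc0 u v hA1 hT μ h
  · exact fun μ h => jac_aux M c hc0 v u hB1 (by rw [show (1 : ℝ) - 4 * v * u = 1 - 4 * u * v from by ring]; exact hT) μ h
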